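/- There exists a positive constant C (depending only on λ) such that |S_n(x) − T_n(x)| ≤ C a_n for all n = 0, 1, 2, … and all x ∈ K. -/

import Mathlib

open MeasureTheory Filter Set Topology
open scoped ENNReal

noncomputable section

/-- Side length of generation-`n` squares: `s n = λ₁ ⋯ λₙ` (here `Λ k` is `λ_{k+1}`). -/
def sideLen (Λ : ℕ → ℝ) (n : ℕ) : ℝ := ∏ k ∈ Finset.range n, Λ k

/-- Lower-left corner of the generation-`n` square encoded by the word `w`. -/
def cornerPt (Λ : ℕ → ℝ) (w : ℕ → Bool × Bool) (n : ℕ) : ℂ :=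
  ∑ k ∈ Finset.range n,
    (((if (w k).1 then sideLen Λ k - sideLen Λ (k + 1) else 0 : ℝ) : ℂ) +
      ((if (w k).2 then sideLen Λ k - sideLen Λ (k + 1) else 0 : ℝ) : ℂ) * Complex.I)

/-- The (closed) generation-`n` square encoded by the word `w`. -/
def cSquare (Λ : ℕ → ℝ) (w : ℕ → Bool × Bool) (n : ℕ) : Set ℂ :=
  {z : ℂ | (cornerPt Λ w n).re ≤ z.re ∧ z.re ≤ (cornerPt Λ w n).re + sideLen Λ n ∧
    (cornerPt Λ w n).im ≤ z.im ∧ z.im ≤ (cornerPt Λ w n).im + sideLen Λ n}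

/-- The family `𝒟_n` of generation-`n` squares. -/
def genSq (Λ : ℕ → ℝ) (n : ℕ) : Set (Set ℂ) := {Q | ∃ w, Q = cSquare Λ w n}

/-- The planar Cantor set `K = ⋂ₙ ⋃ⱼ Qⱼⁿ`. -/
def cantorK (Λ : ℕ → ℝ) : Set ℂ := ⋂ n, ⋃ w : ℕ → Bool × Bool, cSquare Λ w n

/-- The linear density `a_n = 4^{-n}/s_n` at generation `n`. -/
def linDensity (Λ : ℕ → ℝ) (n : ℕ) : ℝ := 1 / (4 ^ n * sideLen Λ n)

open scoped Classical in
/-- `Q_n(x)`: the generation-`n` square containing `x` (the squares of a given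
generation are pairwise disjoint, so it is unique for `x ∈ K`). -/
def Qn (Λ : ℕ → ℝ) (n : ℕ) (x : ℂ) : Set ℂ :=
  if h : ∃ w, x ∈ cSquare Λ w n then cSquare Λ (Classical.choose h) n else ∅

/-- The truncated Cauchy integral at generation `n`:
`T_n(x) = ∫_{K ∖ Q_n(x)} (x-y)⁻¹ dμ(y)`. -/
def Tn (Λ : ℕ → ℝ) (μ : Measure ℂ) (n : ℕ) (x : ℂ) : ℂ :=
  ∫ y in cantorK Λ \ Qn Λ n x, (x - y)⁻¹ ∂μ

/-- The martingale `S_n(x) = μ(Q_n(x))⁻¹ ∫_{Q_n(x)} T_n dμ`. -/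
def Sn (Λ : ℕ → ℝ) (μ : Measure ℂ) (n : ℕ) (x : ℂ) : ℂ :=
  ⨍ z in Qn Λ n x, Tn Λ μ n z ∂μ
section Basic
variable {Λ : ℕ → ℝ} {lam : ℝ}

lemma sideLen_pos (hΛ : ∀ n, 1/4 ≤ Λ n ∧ Λ n ≤ lam) (n : ℕ) : 0 < sideLen Λ n :=
  Finset.prod_pos fun k _ => lt_of_lt_of_le (by norm_num) (hΛ k).1

lemma sideLen_succ (n : ℕ) : sideLen Λ (n+1) = sideLen Λ n * Λ n :=
  Finset.prod_range_succ _ _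

lemma sideLen_succ_le (hΛ : ∀ n, 1/4 ≤ Λ n ∧ Λ n ≤ lam) (n : ℕ) :
    sideLen Λ (n+1) ≤ lam * sideLen Λ n := by
  rw [sideLen_succ, mul_comm]
  exact mul_le_mul_of_nonneg_right (hΛ n).2 (sideLen_pos hΛ n).le

lemma lam_pos (hΛ : ∀ n, 1/4 ≤ Λ n ∧ Λ n ≤ lam) : (0:ℝ) < lam :=
  lt_of_lt_of_le (by norm_num : (0:ℝ) < 1/4) ((hΛ 0).1.trans (hΛ 0).2)

lemma sideLen_le_pow (hΛ : ∀ n, 1/4 ≤ Λ n ∧ Λ n ≤ lam) {k n : ℕ} (h : k ≤ n) :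
    sideLen Λ n ≤ lam ^ (n - k) * sideLen Λ k := by
  induction n with
  | zero => simp_all
  | succ m ih =>
    rcases Nat.eq_or_lt_of_le h with rfl | h'
    · simp
    · have hk : k ≤ m := Nat.lt_succ_iff.mp h'
      have : m + 1 - k = (m - k) + 1 := by omega
      rw [this, pow_succ]
      calc sideLen Λ (m+1) ≤ lam * sideLen Λ m := sideLen_succ_le hΛ m
        _ ≤ lam * (lam ^ (m-k) * sideLen Λ k) :=
          mul_le_mul_of_nonneg_left (ih hk) (lam_pos hΛ).le
        _ = lam ^ (m-k) * lam * sideLen Λ k := by ring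

lemma sideLen_anti (hΛ : ∀ n, 1/4 ≤ Λ n ∧ Λ n ≤ lam) (hlam : lam < 1/2) {k n : ℕ} (h : k ≤ n) :
    sideLen Λ n ≤ sideLen Λ k := by
  calc sideLen Λ n ≤ lam ^ (n-k) * sideLen Λ k := sideLen_le_pow hΛ h
    _ ≤ 1 * sideLen Λ k := by
        apply mul_le_mul_of_nonneg_right _ (sideLen_pos hΛ k).le
        exact pow_le_one₀ (lam_pos hΛ).le (by linarith)
    _ = sideLen Λ k := one_mul _

end Basic
section Geom
variable {Λ : ℕ → ℝ} {lam : ℝ} {w w' : ℕ → Bool × Bool}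

lemma cornerPt_succ_re (n : ℕ) : (cornerPt Λ w (n+1)).re
    = (cornerPt Λ w n).re + (if (w n).1 then sideLen Λ n - sideLen Λ (n+1) else 0) := by
  simp [cornerPt, Finset.sum_range_succ]

lemma cornerPt_succ_im (n : ℕ) : (cornerPt Λ w (n+1)).im
    = (cornerPt Λ w n).im + (if (w n).2 then sideLen Λ n - sideLen Λ (n+1) else 0) := by
  simp [cornerPt, Finset.sum_range_succ]

lemma mem_cSquare {z : ℂ} {n : ℕ} : z ∈ cSquare Λ w n ↔
    (cornerPt Λ w n).re ≤ z.re ∧ z.re ≤ (cornerPt Λ w n).re + sideLen Λ n ∧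
    (cornerPt Λ w n).im ≤ z.im ∧ z.im ≤ (cornerPt Λ w n).im + sideLen Λ n := Iff.rfl

lemma cSquare_succ_subset (hΛ : ∀ n, 1/4 ≤ Λ n ∧ Λ n ≤ lam) (hlam : lam < 1/2) (n : ℕ) :
    cSquare Λ w (n+1) ⊆ cSquare Λ w n := by
  intro z hz
  rw [mem_cSquare] at hz ⊢
  have hs := sideLen_anti hΛ hlam (Nat.le_succ n)
  have hre := cornerPt_succ_re (Λ := Λ) (w := w) n
  have him := cornerPt_succ_im (Λ := Λ) (w := w) n
  have h1 : 0 < sideLen Λ (n+1) := sideLen_pos hΛ _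
  constructor
  · rw [hre] at hz; rcases hz with ⟨h, _, _, _⟩; split_ifs at h <;> linarith
  refine ⟨?_, ?_, ?_⟩
  · rcases hz with ⟨_, h, _, _⟩; rw [hre] at h; split_ifs at h <;> linarith
  · rw [him] at hz; rcases hz with ⟨_, _, h, _⟩; split_ifs at h <;> linarith
  · rcases hz with ⟨_, _, _, h⟩; rw [him] at h; split_ifs at h <;> linarith

lemma cSquare_subset_of_le (hΛ : ∀ n, 1/4 ≤ Λ n ∧ Λ n ≤ lam) (hlam : lam < 1/2)
    {k n : ℕ} (h : k ≤ n) : cSquare Λ w n ⊆ cSquare Λ w k := by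
  induction n with
  | zero => simp_all
  | succ m ih =>
    rcases Nat.eq_or_lt_of_le h with rfl | h'
    · exact subset_rfl
    · exact (cSquare_succ_subset hΛ hlam m).trans (ih (Nat.lt_succ_iff.mp h'))

lemma cSquare_eq_of_cornerPt_eq {n : ℕ} (h : cornerPt Λ w n = cornerPt Λ w' n) :
    cSquare Λ w n = cSquare Λ w' n := by
  unfold cSquare; rw [h]

lemma cornerPt_unique (hΛ : ∀ n, 1/4 ≤ Λ n ∧ Λ n ≤ lam) (hlam : lam < 1/2)
    {x : ℂ} {n : ℕ} (h : x ∈ cSquare Λ w n) (h' : x ∈ cSquare Λ w' n) :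
    cornerPt Λ w n = cornerPt Λ w' n := by
  induction n with
  | zero => simp [cornerPt]
  | succ m ih =>
    have hsub := cSquare_succ_subset (w := w) hΛ hlam m
    have hsub' := cSquare_succ_subset (w := w') hΛ hlam m
    have hc : cornerPt Λ w m = cornerPt Λ w' m := ih (hsub h) (hsub' h')
    have hgap : 2 * sideLen Λ (m+1) < sideLen Λ m := by
      have := sideLen_succ_le hΛ m
      have hp := sideLen_pos hΛ m
      nlinarith [lam_pos hΛ]
    have hre := cornerPt_succ_re (Λ := Λ) (w := w) m
    have hre' := cornerPt_succ_re (Λ := Λ) (w := w') m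
    have him := cornerPt_succ_im (Λ := Λ) (w := w) m
    have him' := cornerPt_succ_im (Λ := Λ) (w := w') m
    rw [mem_cSquare] at h h'
    apply Complex.ext
    · rw [hre, hre', hc]
      congr 1
      rcases h with ⟨h1, h2, _, _⟩; rcases h' with ⟨h1', h2', _, _⟩
      rw [hre] at h1 h2; rw [hre', ← hc] at h1' h2'
      split_ifs at h1 h2 h1' h2' ⊢ <;> linarith
    · rw [him, him', hc]
      congr 1
      rcases h with ⟨_, _, h1, h2⟩; rcases h' with ⟨_, _, h1', h2'⟩
      rw [him] at h1 h2; rw [him', ← hc] at h1' h2'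
      split_ifs at h1 h2 h1' h2' ⊢ <;> linarith

end Geom
section Sep
variable {Λ : ℕ → ℝ} {lam : ℝ} {w w' : ℕ → Bool × Bool} {x y : ℂ}

lemma abs_re_le_dist (x y : ℂ) : |x.re - y.re| ≤ dist x y := by
  rw [Complex.dist_eq]
  simpa [Complex.sub_re] using Complex.abs_re_le_norm (x - y)

lemma abs_im_le_dist (x y : ℂ) : |x.im - y.im| ≤ dist x y := by
  rw [Complex.dist_eq]
  simpa [Complex.sub_im] using Complex.abs_im_le_norm (x - y)

lemma sep_sibling (hΛ : ∀ n, 1/4 ≤ Λ n ∧ Λ n ≤ lam) (hlam : lam < 1/2) {n : ℕ}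
    (hc : cornerPt Λ w n = cornerPt Λ w' n)
    (hne : cornerPt Λ w (n+1) ≠ cornerPt Λ w' (n+1))
    (hx : x ∈ cSquare Λ w (n+1)) (hy : y ∈ cSquare Λ w' (n+1)) :
    (1 - 2*lam) * sideLen Λ n ≤ dist x y := by
  have hgap : (1 - 2*lam) * sideLen Λ n ≤ sideLen Λ n - 2 * sideLen Λ (n+1) := by
    have := sideLen_succ_le hΛ n
    have hp := sideLen_pos hΛ n
    nlinarith
  have hre := cornerPt_succ_re (Λ := Λ) (w := w) n
  have hre' := cornerPt_succ_re (Λ := Λ) (w := w') n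
  have him := cornerPt_succ_im (Λ := Λ) (w := w) n
  have him' := cornerPt_succ_im (Λ := Λ) (w := w') n
  rw [mem_cSquare] at hx hy
  obtain ⟨hx1, hx2, hx3, hx4⟩ := hx
  obtain ⟨hy1, hy2, hy3, hy4⟩ := hy
  rw [hre] at hx1 hx2; rw [hre', ← hc] at hy1 hy2
  rw [him] at hx3 hx4; rw [him', ← hc] at hy3 hy4
  have hcase : ((if (w n).1 then sideLen Λ n - sideLen Λ (n+1) else 0 : ℝ)
        ≠ (if (w' n).1 then sideLen Λ n - sideLen Λ (n+1) else 0 : ℝ))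
      ∨ ((if (w n).2 then sideLen Λ n - sideLen Λ (n+1) else 0 : ℝ)
        ≠ (if (w' n).2 then sideLen Λ n - sideLen Λ (n+1) else 0 : ℝ)) := by
    by_contra hcon
    push_neg at hcon
    exact hne (Complex.ext (by rw [hre, hre', hc, hcon.1]) (by rw [him, him', hc, hcon.2]))
  rcases hcase with hcase | hcase
  · refine le_trans ?_ (abs_re_le_dist x y)
    rw [le_abs]
    split_ifs at hx1 hx2 hy1 hy2 hcase <;> [skip; skip; skip; skip] <;>
      first | (exact absurd rfl hcase) | (left; linarith) | (right; linarith)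
  · refine le_trans ?_ (abs_im_le_dist x y)
    rw [le_abs]
    split_ifs at hx3 hx4 hy3 hy4 hcase <;> [skip; skip; skip; skip] <;>
      first | (exact absurd rfl hcase) | (left; linarith) | (right; linarith)

lemma sep (hΛ : ∀ n, 1/4 ≤ Λ n ∧ Λ n ≤ lam) (hlam : lam < 1/2) :
    ∀ (n : ℕ) (w w' : ℕ → Bool × Bool) (x y : ℂ),
      x ∈ cSquare Λ w (n+1) → y ∈ cSquare Λ w' (n+1) →
      cornerPt Λ w (n+1) ≠ cornerPt Λ w' (n+1) →
      (1 - 2*lam) * sideLen Λ n ≤ dist x y := by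
  intro n
  induction n with
  | zero =>
    intro w w' x y hx hy hne
    exact sep_sibling hΛ hlam (by simp [cornerPt]) hne hx hy
  | succ m ih =>
    intro w w' x y hx hy hne
    by_cases hc : cornerPt Λ w (m+1) = cornerPt Λ w' (m+1)
    · exact sep_sibling hΛ hlam hc hne hx hy
    · have h1 : (1 - 2*lam) * sideLen Λ m ≤ dist x y :=
        ih w w' x y (cSquare_succ_subset hΛ hlam _ hx) (cSquare_succ_subset hΛ hlam _ hy) hc
      have : sideLen Λ (m+1) ≤ sideLen Λ m := sideLen_anti hΛ hlam (Nat.le_succ m)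
      nlinarith [sideLen_pos hΛ (m+1)]

lemma diam_bound {n : ℕ} (hΛ : ∀ n, 1/4 ≤ Λ n ∧ Λ n ≤ lam)
    (hx : x ∈ cSquare Λ w n) (hy : y ∈ cSquare Λ w n) :
    dist x y ≤ 2 * sideLen Λ n := by
  rw [mem_cSquare] at hx hy
  calc dist x y = ‖x - y‖ := Complex.dist_eq x y
    _ ≤ |(x-y).re| + |(x-y).im| := Complex.norm_le_abs_re_add_abs_im _
    _ ≤ 2 * sideLen Λ n := by
        rw [Complex.sub_re, Complex.sub_im]
        have h1 : |x.re - y.re| ≤ sideLen Λ n := abs_le.mpr ⟨by linarith [hx.1, hy.2.1], by linarith [hx.2.1, hy.1]⟩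
        have h2 : |x.im - y.im| ≤ sideLen Λ n := abs_le.mpr ⟨by linarith [hx.2.2.1, hy.2.2.2], by linarith [hx.2.2.2, hy.2.2.1]⟩
        linarith

end Sep
section Meas
variable {Λ : ℕ → ℝ} {lam : ℝ} {w w' : ℕ → Bool × Bool} {x : ℂ}

lemma cornerPt_congr {n : ℕ} (h : ∀ k < n, w k = w' k) :
    cornerPt Λ w n = cornerPt Λ w' n := by
  unfold cornerPt
  refine Finset.sum_congr rfl fun k hk => ?_
  rw [h k (Finset.mem_range.mp hk)]

lemma cSquare_eq_Icc (n : ℕ) : cSquare Λ w n =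
    Complex.re ⁻¹' Set.Icc (cornerPt Λ w n).re ((cornerPt Λ w n).re + sideLen Λ n) ∩
    Complex.im ⁻¹' Set.Icc (cornerPt Λ w n).im ((cornerPt Λ w n).im + sideLen Λ n) := by
  ext z; simp [cSquare, Set.mem_Icc]; tauto

lemma isClosed_cSquare (n : ℕ) : IsClosed (cSquare Λ w n) := by
  rw [cSquare_eq_Icc]
  exact (isClosed_Icc.preimage Complex.continuous_re).inter
    (isClosed_Icc.preimage Complex.continuous_im)

lemma measurableSet_cSquare (n : ℕ) : MeasurableSet (cSquare Λ w n) :=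
  (isClosed_cSquare n).measurableSet

lemma iUnion_cSquare_eq (n : ℕ) : (⋃ w : ℕ → Bool × Bool, cSquare Λ w n)
    = ⋃ v : Fin n → Bool × Bool,
        cSquare Λ (fun k => if h : k < n then v ⟨k, h⟩ else (true, true)) n := by
  apply Set.Subset.antisymm
  · rintro z hz
    obtain ⟨u, hu⟩ := Set.mem_iUnion.mp hz
    apply Set.mem_iUnion.mpr
    refine ⟨fun i => u i, ?_⟩
    have : cornerPt Λ u n = cornerPt Λ (fun k => if h : k < n then u k else (true, true)) n :=
      cornerPt_congr (fun k hk => by simp [hk])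
    rwa [← cSquare_eq_of_cornerPt_eq this]
  · rintro z hz
    obtain ⟨v, hv⟩ := Set.mem_iUnion.mp hz
    exact Set.mem_iUnion.mpr ⟨_, hv⟩

lemma isClosed_iUnion_cSquare (n : ℕ) : IsClosed (⋃ w : ℕ → Bool × Bool, cSquare Λ w n) := by
  rw [iUnion_cSquare_eq]
  exact isClosed_iUnion_of_finite fun v => isClosed_cSquare n

lemma isClosed_cantorK : IsClosed (cantorK Λ) :=
  isClosed_iInter fun n => isClosed_iUnion_cSquare n

lemma measurableSet_cantorK : MeasurableSet (cantorK Λ) :=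
  isClosed_cantorK.measurableSet

lemma exists_word (hx : x ∈ cantorK Λ) (n : ℕ) : ∃ w, x ∈ cSquare Λ w n := by
  have := Set.mem_iInter.mp hx n
  exact Set.mem_iUnion.mp this

lemma cantorK_subset_sq0 : cantorK Λ ⊆ cSquare Λ w 0 := by
  intro z hz
  obtain ⟨w', hw'⟩ := exists_word hz 0
  rwa [cSquare_eq_of_cornerPt_eq (w := w) (w' := w') (by simp [cornerPt])]

lemma Qn_eq (hΛ : ∀ n, 1/4 ≤ Λ n ∧ Λ n ≤ lam) (hlam : lam < 1/2)
    {n : ℕ} (hx : x ∈ cSquare Λ w n) : Qn Λ n x = cSquare Λ w n := by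
  classical
  have h : ∃ w', x ∈ cSquare Λ w' n := ⟨w, hx⟩
  rw [Qn, dif_pos h]
  exact cSquare_eq_of_cornerPt_eq
    (cornerPt_unique hΛ hlam (Classical.choose_spec h) hx)

end Meas
section Kernel
variable {Λ : ℕ → ℝ} {lam : ℝ} {w : ℕ → Bool × Bool} {x y z : ℂ}
variable {μ : Measure ℂ} [IsProbabilityMeasure μ]

lemma dist_ge (hΛ : ∀ n, 1/4 ≤ Λ n ∧ Λ n ≤ lam) (hlam : lam < 1/2) {k : ℕ}
    (hz : z ∈ cSquare Λ w (k+1)) (hy : y ∈ cantorK Λ) (hy' : y ∉ cSquare Λ w (k+1)) :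
    (1 - 2*lam) * sideLen Λ k ≤ dist z y := by
  obtain ⟨w', hw'⟩ := exists_word hy (k+1)
  have hne : cornerPt Λ w (k+1) ≠ cornerPt Λ w' (k+1) := by
    intro h
    exact hy' (by rwa [cSquare_eq_of_cornerPt_eq h])
  exact sep hΛ hlam k w w' z y hz hw' hne

lemma integrableOn_inv_of_dist {c : ℝ} (hc : 0 < c) {S : Set ℂ} (hS : MeasurableSet S)
    (h : ∀ y ∈ S, c ≤ dist z y) : IntegrableOn (fun y => (z - y)⁻¹) S μ := by
  apply Integrable.mono' (integrable_const c⁻¹)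
  · exact ((measurable_const.sub measurable_id).inv).aestronglyMeasurable
  · rw [ae_restrict_iff' hS]
    filter_upwards with y hy
    rw [norm_inv]
    have h1 : c ≤ ‖z - y‖ := by rw [← dist_eq_norm]; exact h y hy
    exact inv_anti₀ hc h1

lemma kernel_integrableOn (hΛ : ∀ n, 1/4 ≤ Λ n ∧ Λ n ≤ lam) (hlam : lam < 1/2) {n : ℕ}
    (hz : z ∈ cSquare Λ w n) :
    IntegrableOn (fun y => (z - y)⁻¹) (cantorK Λ \ cSquare Λ w n) μ := by
  cases n with
  | zero =>
    rw [Set.diff_eq_empty.mpr cantorK_subset_sq0]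
    exact integrableOn_empty
  | succ m =>
    apply integrableOn_inv_of_dist (c := (1 - 2*lam) * sideLen Λ m)
    · exact mul_pos (by linarith) (sideLen_pos hΛ m)
    · exact measurableSet_cantorK.diff (measurableSet_cSquare _)
    · exact fun y hy => dist_ge hΛ hlam hz hy.1 hy.2

lemma kernel_diff_bound (hΛ : ∀ n, 1/4 ≤ Λ n ∧ Λ n ≤ lam) (hlam : lam < 1/2)
    {n m : ℕ} (hmn : m + 1 ≤ n)
    (hx : x ∈ cSquare Λ w n) (hz : z ∈ cSquare Λ w n)
    (hy : y ∈ cantorK Λ) (hy' : y ∉ cSquare Λ w (m+1)) :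
    ‖(z - y)⁻¹ - (x - y)⁻¹‖ ≤
      2 * sideLen Λ n / ((1 - 2*lam) * sideLen Λ m)^2 := by
  set c := (1 - 2*lam) * sideLen Λ m with hcdef
  have hc : 0 < c := mul_pos (by linarith) (sideLen_pos hΛ m)
  have hzm : z ∈ cSquare Λ w (m+1) := cSquare_subset_of_le hΛ hlam hmn hz
  have hxm : x ∈ cSquare Λ w (m+1) := cSquare_subset_of_le hΛ hlam hmn hx
  have hzy : c ≤ ‖z - y‖ := by rw [← dist_eq_norm]; exact dist_ge hΛ hlam hzm hy hy'
  have hxy : c ≤ ‖x - y‖ := by rw [← dist_eq_norm]; exact dist_ge hΛ hlam hxm hy hy'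
  have hzy0 : z - y ≠ 0 := fun h => by simp [h] at hzy; linarith
  have hxy0 : x - y ≠ 0 := fun h => by simp [h] at hxy; linarith
  have hxz : ‖x - z‖ ≤ 2 * sideLen Λ n := by
    rw [← dist_eq_norm]; exact diam_bound hΛ hx hz
  have hid : (z - y)⁻¹ - (x - y)⁻¹ = (x - z) / ((z - y) * (x - y)) := by
    field_simp
    ring
  rw [hid, norm_div, norm_mul, sq]
  apply div_le_div₀ (by nlinarith [sideLen_pos hΛ n]) hxz (mul_pos hc hc)
  exact mul_le_mul hzy hxy hc.le (norm_nonneg _)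

end Kernel
section Annuli
variable {Λ : ℕ → ℝ} {lam : ℝ} {w : ℕ → Bool × Bool} {x z : ℂ}
variable {μ : Measure ℂ} [IsProbabilityMeasure μ]

lemma toReal_pow_quarter {m : ℕ} : (((4:ℝ≥0∞)⁻¹ ^ m)).toReal = (4:ℝ)⁻¹ ^ m := by
  rw [ENNReal.toReal_pow, ENNReal.toReal_inv]
  norm_num

lemma annuli (hΛ : ∀ n, 1/4 ≤ Λ n ∧ Λ n ≤ lam) (hlam : lam < 1/2)
    (hμQ : ∀ (w : ℕ → Bool × Bool) (n : ℕ), μ (cSquare Λ w n) = (4 : ℝ≥0∞)⁻¹ ^ n)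
    {n : ℕ} (hx : x ∈ cSquare Λ w n) (hz : z ∈ cSquare Λ w n) :
    ∀ m ≤ n,
      IntegrableOn (fun y => ‖(z - y)⁻¹ - (x - y)⁻¹‖) (cantorK Λ \ cSquare Λ w m) μ ∧
      ∫ y in cantorK Λ \ cSquare Λ w m, ‖(z - y)⁻¹ - (x - y)⁻¹‖ ∂μ ≤
        ∑ k ∈ Finset.range m,
          2 * sideLen Λ n / ((1 - 2*lam) * sideLen Λ k)^2 * (4:ℝ)⁻¹ ^ k := by
  set F : ℂ → ℝ := fun y => ‖(z - y)⁻¹ - (x - y)⁻¹‖ with hF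
  have hFmeas : Measurable F :=
    (((measurable_const.sub measurable_id).inv).sub
      ((measurable_const.sub measurable_id).inv)).norm
  intro m
  induction m with
  | zero =>
    intro _
    rw [Set.diff_eq_empty.mpr cantorK_subset_sq0]
    refine ⟨integrableOn_empty, ?_⟩
    simp
  | succ m ih =>
    intro hm1
    have hm : m ≤ n := le_trans (Nat.le_succ m) hm1
    obtain ⟨ihInt, ihBound⟩ := ih hm
    set bnd : ℝ := 2 * sideLen Λ n / ((1 - 2*lam) * sideLen Λ m)^2 with hbnd
    have hbnd0 : 0 ≤ bnd := by
      apply div_nonneg _ (sq_nonneg _)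
      nlinarith [sideLen_pos hΛ n]
    set A := cantorK Λ \ cSquare Λ w m with hA
    set B := (cantorK Λ \ cSquare Λ w (m+1)) ∩ cSquare Λ w m with hB
    have hsub := cSquare_succ_subset (w := w) hΛ hlam m
    have hAB : cantorK Λ \ cSquare Λ w (m+1) = A ∪ B := by
      ext u
      simp only [hA, hB, Set.mem_diff, Set.mem_union, Set.mem_inter_iff]
      constructor
      · rintro ⟨h1, h2⟩
        by_cases h3 : u ∈ cSquare Λ w m
        · exact Or.inr ⟨⟨h1, h2⟩, h3⟩
        · exact Or.inl ⟨h1, h3⟩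
      · rintro (⟨h1, h2⟩ | ⟨⟨h1, h2⟩, _⟩)
        · exact ⟨h1, fun hc => h2 (hsub hc)⟩
        · exact ⟨h1, h2⟩
    have hdisj : Disjoint A B := by
      rw [Set.disjoint_left]
      rintro u ⟨_, h2⟩ ⟨_, h3⟩
      exact h2 h3
    have hBm : MeasurableSet B :=
      (measurableSet_cantorK.diff (measurableSet_cSquare _)).inter (measurableSet_cSquare _)
    have hFb : ∀ y ∈ B, F y ≤ bnd := fun y hy =>
      kernel_diff_bound hΛ hlam hm1 hx hz hy.1.1 hy.1.2
    have hFintB : IntegrableOn F B μ := by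
      apply Integrable.mono' (integrable_const bnd) (hFmeas.aestronglyMeasurable.restrict)
      rw [ae_restrict_iff' hBm]
      filter_upwards with y hy
      simpa [hF, abs_of_nonneg (norm_nonneg _)] using hFb y hy
    have hμB : (μ B).toReal ≤ (4:ℝ)⁻¹ ^ m := by
      have h1 : μ B ≤ (4:ℝ≥0∞)⁻¹ ^ m := by
        rw [← hμQ w m]
        exact measure_mono fun u hu => hu.2
      calc (μ B).toReal ≤ (((4:ℝ≥0∞)⁻¹ ^ m)).toReal :=
            ENNReal.toReal_mono (by simp) h1
        _ = (4:ℝ)⁻¹ ^ m := toReal_pow_quarter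
    have h2 : ∫ y in B, F y ∂μ ≤ bnd * (4:ℝ)⁻¹ ^ m := by
      calc ∫ y in B, F y ∂μ ≤ ∫ _ in B, bnd ∂μ :=
            setIntegral_mono_on hFintB (integrable_const bnd).integrableOn hBm hFb
        _ = (μ B).toReal • bnd := setIntegral_const _
        _ ≤ ((4:ℝ)⁻¹ ^ m) * bnd := by
            rw [smul_eq_mul]
            exact mul_le_mul_of_nonneg_right hμB hbnd0
        _ = bnd * (4:ℝ)⁻¹ ^ m := mul_comm _ _
    constructor
    · rw [hAB]
      exact ihInt.union hFintB
    · rw [hAB, setIntegral_union hdisj hBm ihInt hFintB, Finset.sum_range_succ]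
      exact add_le_add ihBound h2
end Annuli
section SumBound
variable {Λ : ℕ → ℝ} {lam : ℝ}

lemma linDensity_pos (hΛ : ∀ n, 1/4 ≤ Λ n ∧ Λ n ≤ lam) (n : ℕ) : 0 < linDensity Λ n := by
  unfold linDensity
  have := sideLen_pos hΛ n
  positivity

lemma term_bound (hΛ : ∀ n, 1/4 ≤ Λ n ∧ Λ n ≤ lam) (hlam : lam < 1/2) {k n : ℕ} (hk : k ≤ n) :
    2 * sideLen Λ n / ((1 - 2*lam) * sideLen Λ k)^2 * (4:ℝ)⁻¹ ^ k
      ≤ 2 / (1 - 2*lam)^2 * ((4*lam^2)^(n-k) * linDensity Λ n) := by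
  have hp := sideLen_pos hΛ n
  have hq := sideLen_pos hΛ k
  have hδ : (0:ℝ) < 1 - 2*lam := by linarith
  have hlp := lam_pos hΛ
  have hs : sideLen Λ n ≤ lam ^ (n-k) * sideLen Λ k := sideLen_le_pow hΛ hk
  have hsq : (sideLen Λ n)^2 ≤ lam^(2*(n-k)) * (sideLen Λ k)^2 := by
    calc (sideLen Λ n)^2 ≤ (lam^(n-k) * sideLen Λ k)^2 := by
          apply sq_le_sq'
          · nlinarith [pow_pos hlp (n-k)]
          · exact hs
      _ = lam^(2*(n-k)) * (sideLen Λ k)^2 := by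
          rw [mul_pow, ← pow_mul, mul_comm (n-k) 2]
  have h4 : (4:ℝ)⁻¹ ^ k * 4 ^ n = 4 ^ (n - k) := by
    have h5 : (4:ℝ)^n = 4^(n-k) * 4^k := by rw [← pow_add, Nat.sub_add_cancel hk]
    rw [h5, inv_pow]
    field_simp
  have hX : (4:ℝ)⁻¹ ^ k * sideLen Λ n / (sideLen Λ k)^2
      ≤ (4*lam^2)^(n-k) / (4^n * sideLen Λ n) := by
    rw [div_le_div_iff₀ (pow_pos hq 2) (by positivity)]
    have hL : (4:ℝ)⁻¹ ^ k * sideLen Λ n * (4^n * sideLen Λ n)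
        = 4^(n-k) * (sideLen Λ n)^2 := by rw [← h4]; ring
    have hR : ((4:ℝ)*lam^2)^(n-k) = 4^(n-k) * lam^(2*(n-k)) := by
      rw [mul_pow, ← pow_mul]
    rw [hL, hR, mul_assoc]
    exact mul_le_mul_of_nonneg_left hsq (by positivity)
  calc 2 * sideLen Λ n / ((1 - 2*lam) * sideLen Λ k)^2 * (4:ℝ)⁻¹ ^ k
      = 2 / (1 - 2*lam)^2 * ((4:ℝ)⁻¹ ^ k * sideLen Λ n / (sideLen Λ k)^2) := by
        field_simp
        try ring
    _ ≤ 2 / (1 - 2*lam)^2 * ((4*lam^2)^(n-k) / (4^n * sideLen Λ n)) :=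
        mul_le_mul_of_nonneg_left hX (by positivity)
    _ = 2 / (1 - 2*lam)^2 * ((4*lam^2)^(n-k) * linDensity Λ n) := by
        rw [linDensity]
        field_simp
        try ring

lemma geo_sum_bound {r : ℝ} (h0 : 0 ≤ r) (h1 : r < 1) (n : ℕ) :
    ∑ k ∈ Finset.range n, r^(n-k) ≤ (1-r)⁻¹ := by
  have hrefl : ∑ k ∈ Finset.range n, r^(n-k) = ∑ k ∈ Finset.range n, r^(k+1) := by
    rw [← Finset.sum_range_reflect (fun k => r^(k+1)) n]
    apply Finset.sum_congr rfl
    intro k hk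
    have : n - k = n - 1 - k + 1 := by
      have := Finset.mem_range.mp hk; omega
    rw [this]
  rw [hrefl]
  have hle : ∑ k ∈ Finset.range n, r^(k+1) ≤ ∑ k ∈ Finset.range n, r^k :=
    Finset.sum_le_sum fun k _ => pow_le_pow_of_le_one h0 h1.le (Nat.le_succ k)
  have hgeom : ∑ k ∈ Finset.range n, r^k = (1 - r^n)/(1-r) := by
    rw [geom_sum_eq h1.ne n]
    rw [div_eq_div_iff (by linarith) (by linarith)]
    ring
  rw [hgeom] at hle
  refine hle.trans ?_
  rw [inv_eq_one_div]
  gcongr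
  · nlinarith [pow_nonneg h0 n]

end SumBound
section Total
variable {Λ : ℕ → ℝ} {lam : ℝ}

lemma sum_total_bound (hΛ : ∀ n, 1/4 ≤ Λ n ∧ Λ n ≤ lam) (hlam : lam < 1/2) (n : ℕ) :
    ∑ k ∈ Finset.range n, 2 * sideLen Λ n / ((1 - 2*lam) * sideLen Λ k)^2 * (4:ℝ)⁻¹ ^ k
      ≤ (2 / (1 - 2*lam)^2 * (1 - 4*lam^2)⁻¹) * linDensity Λ n := by
  have hlp := lam_pos hΛ
  have hδ : (0:ℝ) < 1 - 2*lam := by linarith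
  have hr0 : (0:ℝ) ≤ 4*lam^2 := by positivity
  have hr1 : 4*lam^2 < 1 := by nlinarith
  have hld := (linDensity_pos hΛ n).le
  calc ∑ k ∈ Finset.range n, 2 * sideLen Λ n / ((1 - 2*lam) * sideLen Λ k)^2 * (4:ℝ)⁻¹ ^ k
      ≤ ∑ k ∈ Finset.range n, 2 / (1 - 2*lam)^2 * ((4*lam^2)^(n-k) * linDensity Λ n) :=
        Finset.sum_le_sum fun k hk => term_bound hΛ hlam (Finset.mem_range.mp hk).le
    _ = (2 / (1 - 2*lam)^2 * linDensity Λ n) * ∑ k ∈ Finset.range n, (4*lam^2)^(n-k) := by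
        rw [Finset.mul_sum]
        exact Finset.sum_congr rfl fun k _ => by ring
    _ ≤ (2 / (1 - 2*lam)^2 * linDensity Λ n) * (1 - 4*lam^2)⁻¹ :=
        mul_le_mul_of_nonneg_left (geo_sum_bound hr0 hr1 n) (by positivity)
    _ = (2 / (1 - 2*lam)^2 * (1 - 4*lam^2)⁻¹) * linDensity Λ n := by ring

end Total

theorem martingale_minus_truncated_bound' (Λ : ℕ → ℝ) (lam : ℝ) (hlam : lam < 1 / 2)
    (hΛ : ∀ n, 1 / 4 ≤ Λ n ∧ Λ n ≤ lam)
    (μ : Measure ℂ) [IsProbabilityMeasure μ]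
    (hμK : μ (cantorK Λ) = 1)
    (hμQ : ∀ (w : ℕ → Bool × Bool) (n : ℕ), μ (cSquare Λ w n) = (4 : ℝ≥0∞)⁻¹ ^ n) :
    ∃ C : ℝ, 0 < C ∧ ∀ (n : ℕ), ∀ x ∈ cantorK Λ,
      ‖Sn Λ μ n x - Tn Λ μ n x‖ ≤ C * linDensity Λ n := by
  have hlp := lam_pos hΛ
  have hδ : (0:ℝ) < 1 - 2*lam := by linarith
  have hr1 : 4*lam^2 < 1 := by nlinarith
  set C : ℝ := 2 / (1 - 2*lam)^2 * (1 - 4*lam^2)⁻¹ with hC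
  have hCpos : 0 < C := mul_pos (div_pos two_pos (pow_pos hδ 2)) (inv_pos.mpr (by linarith))
  refine ⟨C, hCpos, ?_⟩
  intro n x hx
  obtain ⟨w, hw⟩ := exists_word hx n
  have hQn : Qn Λ n x = cSquare Λ w n := Qn_eq hΛ hlam hw
  set Q : Set ℂ := cSquare Λ w n with hQdef
  have hQmeas : MeasurableSet Q := measurableSet_cSquare n
  have hKQmeas : MeasurableSet (cantorK Λ \ Q) :=
    measurableSet_cantorK.diff hQmeas
  set g : ℂ → ℂ := fun ζ => ∫ y,
      (Set.univ ×ˢ (cantorK Λ \ Q)).indicator (fun q : ℂ × ℂ => (q.1 - q.2)⁻¹) (ζ, y) ∂μ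
    with hgdef
  have hg_eq : ∀ ζ, g ζ = ∫ y in cantorK Λ \ Q, (ζ - y)⁻¹ ∂μ := by
    intro ζ
    show (∫ y, (Set.univ ×ˢ (cantorK Λ \ Q)).indicator
      (fun q : ℂ × ℂ => (q.1 - q.2)⁻¹) (ζ, y) ∂μ) = _
    have h1 : (fun y => (Set.univ ×ˢ (cantorK Λ \ Q)).indicator
        (fun q : ℂ × ℂ => (q.1 - q.2)⁻¹) (ζ, y))
        = (cantorK Λ \ Q).indicator (fun y => (ζ - y)⁻¹) := by
      funext y
      by_cases hy : y ∈ cantorK Λ \ Q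
      · rw [Set.indicator_of_mem (by simp [hy]), Set.indicator_of_mem hy]
      · rw [Set.indicator_of_notMem (by simp [hy]), Set.indicator_of_notMem hy]
    rw [h1, integral_indicator hKQmeas]
  have hg_meas : StronglyMeasurable g := by
    apply StronglyMeasurable.integral_prod_right'
    exact (((measurable_fst.sub measurable_snd).inv).indicator
      (MeasurableSet.univ.prod hKQmeas)).stronglyMeasurable
  have hTg : ∀ ζ ∈ Q, Tn Λ μ n ζ = g ζ := by
    intro ζ hζ
    rw [Tn, Qn_eq hΛ hlam hζ, hg_eq]
  have hB : ∀ ζ ∈ Q, ‖g ζ - g x‖ ≤ C * linDensity Λ n := by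
    intro ζ hζ
    rw [hg_eq, hg_eq,
      ← integral_sub (kernel_integrableOn hΛ hlam hζ) (kernel_integrableOn hΛ hlam hw)]
    calc ‖∫ y in cantorK Λ \ Q, ((ζ - y)⁻¹ - (x - y)⁻¹) ∂μ‖
        ≤ ∫ y in cantorK Λ \ Q, ‖(ζ - y)⁻¹ - (x - y)⁻¹‖ ∂μ :=
          norm_integral_le_integral_norm _
      _ ≤ ∑ k ∈ Finset.range n,
            2 * sideLen Λ n / ((1 - 2*lam) * sideLen Λ k)^2 * (4:ℝ)⁻¹ ^ k :=
          (annuli hΛ hlam hμQ hw hζ n le_rfl).2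
      _ ≤ C * linDensity Λ n := sum_total_bound hΛ hlam n
  have hgInt : IntegrableOn g Q μ := by
    apply Integrable.mono' (integrable_const (‖g x‖ + C * linDensity Λ n))
      hg_meas.aestronglyMeasurable.restrict
    rw [ae_restrict_iff' hQmeas]
    filter_upwards with ζ hζ
    have h1 := hB ζ hζ
    calc ‖g ζ‖ = ‖g x + (g ζ - g x)‖ := by congr 1; ring
      _ ≤ ‖g x‖ + ‖g ζ - g x‖ := norm_add_le _ _
      _ ≤ ‖g x‖ + C * linDensity Λ n := by linarith
  have hμQn : μ Q = (4:ℝ≥0∞)⁻¹ ^ n := hμQ w n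
  have hμQtop : μ Q < ⊤ := measure_lt_top μ Q
  have hc0 : 0 < (μ Q).toReal := by
    rw [hμQn, toReal_pow_quarter]
    positivity
  have hSn : Sn Λ μ n x = (μ Q).toReal⁻¹ • ∫ ζ in Q, g ζ ∂μ := by
    rw [Sn, hQn, setAverage_eq]
    congr 1
    exact setIntegral_congr_fun hQmeas hTg
  have hTx : Tn Λ μ n x = g x := hTg x hw
  have hkey : ∫ ζ in Q, (g ζ - g x) ∂μ = (∫ ζ in Q, g ζ ∂μ) - (μ Q).toReal • g x := by
    rw [integral_sub hgInt (integrable_const (g x)), setIntegral_const]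
    rfl
  have hrepr : Sn Λ μ n x - Tn Λ μ n x = (μ Q).toReal⁻¹ • ∫ ζ in Q, (g ζ - g x) ∂μ := by
    rw [hSn, hTx, hkey, smul_sub, smul_smul, inv_mul_cancel₀ hc0.ne', one_smul]
  rw [hrepr, norm_smul]
  have hnorm : ‖∫ ζ in Q, (g ζ - g x) ∂μ‖ ≤ (C * linDensity Λ n) * (μ Q).toReal :=
    norm_setIntegral_le_of_norm_le_const hμQtop hB
  calc ‖(μ Q).toReal⁻¹‖ * ‖∫ ζ in Q, (g ζ - g x) ∂μ‖
      ≤ (μ Q).toReal⁻¹ * ((C * linDensity Λ n) * (μ Q).toReal) := by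
        rw [Real.norm_of_nonneg (inv_nonneg.mpr hc0.le)]
        exact mul_le_mul_of_nonneg_left hnorm (inv_nonneg.mpr hc0.le)
    _ = C * linDensity Λ n := by
        field_simp
/-- `|S_n(x) - T_n(x)| ≤ C a_n` for all `n ≥ 0` and `x ∈ K`. -/
theorem martingale_minus_truncated_bound (Λ : ℕ → ℝ) (lam : ℝ) (hlam : lam < 1 / 2)
    (hΛ : ∀ n, 1 / 4 ≤ Λ n ∧ Λ n ≤ lam)
    (μ : Measure ℂ) [IsProbabilityMeasure μ]
    (hμK : μ (cantorK Λ) = 1)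
    (hμQ : ∀ (w : ℕ → Bool × Bool) (n : ℕ), μ (cSquare Λ w n) = (4 : ℝ≥0∞)⁻¹ ^ n) :
    ∃ C : ℝ, 0 < C ∧ ∀ (n : ℕ), ∀ x ∈ cantorK Λ,
      ‖Sn Λ μ n x - Tn Λ μ n x‖ ≤ C * linDensity Λ n := by
  exact martingale_minus_truncated_bound' Λ lam hlam hΛ μ hμK hμQ
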